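/- Every freshness environment ∇ reduces under ⟹* to a unique reduced freshness environment nf(∇), its normal form. -/
import Mathlib


set_option maxHeartbeats 1000000

/-- Atoms: a countably infinite set. -/
abbrev Atom : Type := ℕ

/-- The subgroup of `Equiv.Perm Atom` consisting of the finite permutations,
i.e. those moving only finitely many atoms. -/
def finPermSubgroup : Subgroup (Equiv.Perm Atom) where
  carrier := {π : Equiv.Perm Atom | {a : Atom | π a ≠ a}.Finite}
  one_mem' := by
    have h : {a : Atom | (1 : Equiv.Perm Atom) a ≠ a} = ∅ := by ext a; simp
    simp only [Set.mem_setOf_eq, h]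
    exact Set.finite_empty
  mul_mem' := by
    intro π σ hπ hσ
    refine (hπ.union hσ).subset ?_
    intro a ha
    simp only [Set.mem_setOf_eq, Equiv.Perm.mul_apply] at ha
    by_cases h : σ a = a
    · exact Or.inl (by simp only [Set.mem_setOf_eq]; rwa [h] at ha)
    · exact Or.inr h
  inv_mem' := by
    intro π hπ
    refine (hπ.image (⇑π⁻¹)).subset ?_
    intro a ha
    simp only [Set.mem_setOf_eq] at ha
    have h1 : π a ≠ a := by
      intro h
      apply ha
      conv_lhs => rw [← h]
      simp
    exact ⟨π a, fun h => h1 (π.injective h), by simp⟩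

/-- Finite permutations of atoms. -/
abbrev FinPerm : Type := finPermSubgroup

/-- The transposition of two atoms, as a finite permutation. -/
def swapPerm (a b : Atom) : FinPerm :=
  ⟨Equiv.swap a b, by
    refine ((Set.finite_singleton b).insert a).subset ?_
    intro x hx
    simp only [Set.mem_setOf_eq] at hx
    by_contra h
    simp only [Set.mem_insert_iff, Set.mem_singleton_iff, not_or] at h
    exact hx (Equiv.swap_apply_of_ne_of_ne h.1 h.2)⟩

/-- Raw terms over a nominal signature (with set of function symbols `F`) and a set `V`
of variables: variables, atoms, moderated terms (explicit permutations), atom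
abstractions, (binary-encoded, with empty product `unit`) products, and data built
with function symbols. -/
inductive RawTerm (V F : Type) : Type
  | var : V → RawTerm V F
  | atom : Atom → RawTerm V F
  | mod : FinPerm → RawTerm V F → RawTerm V F
  | abs : Atom → RawTerm V F → RawTerm V F
  | unit : RawTerm V F
  | pair : RawTerm V F → RawTerm V F → RawTerm V F
  | app : F → RawTerm V F → RawTerm V F

variable {V F : Type}

/-- The permutation action on raw terms: `π·x = x`, `π·a = π a`,
`π·(π₁·t) = (π ∘ π₁ ∘ π⁻¹)·(π·t)`, `π·[a]t = [π a](π·t)`, componentwise on products,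
`π·f(t) = f(π·t)`. -/
def permTerm (π : FinPerm) : RawTerm V F → RawTerm V F
  | .var x => .var x
  | .atom a => .atom (π.1 a)
  | .mod π₁ t => .mod (π * π₁ * π⁻¹) (permTerm π t)
  | .abs a t => .abs (π.1 a) (permTerm π t)
  | .unit => .unit
  | .pair t s => .pair (permTerm π t) (permTerm π s)
  | .app f t => .app f (permTerm π t)

attribute [local instance] Classical.propDecidable

/-- Simplification of freshness environments (finite sets of freshness assertions
`a ≉ t`): the rewrite relation `⟹` generated by the rules of
Definition "Simplification of freshness environments" (the selected assertion is
required not to occur in the remaining environment, as `⟹` rewrites sets). -/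
inductive EStep : Finset (Atom × RawTerm V F) → Finset (Atom × RawTerm V F) → Prop
  | atom (a b : Atom) (E : Finset (Atom × RawTerm V F)) : a ≠ b →
      (a, RawTerm.atom b) ∉ E →
      EStep (insert (a, RawTerm.atom b) E) E
  | mod (a : Atom) (π : FinPerm) (t : RawTerm V F) (E : Finset (Atom × RawTerm V F)) :
      (a, RawTerm.mod π t) ∉ E →
      EStep (insert (a, RawTerm.mod π t) E) (insert (π⁻¹.1 a, t) E)
  | abs_diff (a b : Atom) (t : RawTerm V F) (E : Finset (Atom × RawTerm V F)) :
      a ≠ b → (a, RawTerm.abs b t) ∉ E →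
      EStep (insert (a, RawTerm.abs b t) E) (insert (a, t) E)
  | abs_same (a : Atom) (t : RawTerm V F) (E : Finset (Atom × RawTerm V F)) :
      (a, RawTerm.abs a t) ∉ E →
      EStep (insert (a, RawTerm.abs a t) E) E
  | unit (a : Atom) (E : Finset (Atom × RawTerm V F)) :
      (a, RawTerm.unit) ∉ E →
      EStep (insert (a, (RawTerm.unit : RawTerm V F)) E) E
  | pair (a : Atom) (t s : RawTerm V F) (E : Finset (Atom × RawTerm V F)) :
      (a, RawTerm.pair t s) ∉ E →
      EStep (insert (a, RawTerm.pair t s) E) (insert (a, t) (insert (a, s) E))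
  | app (a : Atom) (f : F) (t : RawTerm V F) (E : Finset (Atom × RawTerm V F)) :
      (a, RawTerm.app f t) ∉ E →
      EStep (insert (a, RawTerm.app f t) E) (insert (a, t) E)

/-- A freshness assertion is reduced iff it is of the form `a ≉ a` or `a ≉ x` with `x`
a variable; an environment is reduced iff all its assertions are. -/
def ReducedEnv (E : Finset (Atom × RawTerm V F)) : Prop :=
  ∀ p ∈ E, (∃ a : Atom, p = (a, RawTerm.atom a)) ∨
    (∃ (a : Atom) (x : V), p = (a, RawTerm.var x))


def tsize : RawTerm V F → ℕ
  | .var _ => 1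
  | .atom _ => 1
  | .mod _ t => tsize t + 1
  | .abs _ t => tsize t + 1
  | .unit => 1
  | .pair t s => tsize t + tsize s + 1
  | .app _ t => tsize t + 1

def measureE (E : Finset (Atom × RawTerm V F)) : ℕ := ∑ p ∈ E, tsize p.2

noncomputable def nf1 : RawTerm V F → Atom → Finset (Atom × RawTerm V F)
  | .var x, a => {(a, .var x)}
  | .atom b, a => if a = b then {(a, .atom b)} else ∅
  | .mod π t, a => nf1 t (π⁻¹.1 a)
  | .abs b t, a => if a = b then ∅ else nf1 t a
  | .unit, _ => ∅
  | .pair t s, a => nf1 t a ∪ nf1 s a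
  | .app _ t, a => nf1 t a
termination_by t _ => tsize t
decreasing_by all_goals simp [tsize] <;> omega

noncomputable def nf (E : Finset (Atom × RawTerm V F)) : Finset (Atom × RawTerm V F) :=
  E.biUnion (fun p => nf1 p.2 p.1)

lemma nf_insert (p : Atom × RawTerm V F) (E : Finset (Atom × RawTerm V F)) :
    nf (insert p E) = nf1 p.2 p.1 ∪ nf E :=
  Finset.biUnion_insert

lemma step_nf {E E' : Finset (Atom × RawTerm V F)} (h : EStep E E') : nf E = nf E' := by
  cases h with
  | atom a b E hne _ => simp [nf_insert, nf1, hne]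
  | mod a π t E _ => simp [nf_insert, nf1]
  | abs_diff a b t E hne _ => simp [nf_insert, nf1, hne]
  | abs_same a t E _ => simp [nf_insert, nf1]
  | unit a E _ => simp [nf_insert, nf1]
  | pair a t s E _ => simp [nf_insert, nf1, Finset.union_assoc]
  | app a f t E _ => simp [nf_insert, nf1]

lemma rtg_nf {E E' : Finset (Atom × RawTerm V F)}
    (h : Relation.ReflTransGen EStep E E') : nf E = nf E' := by
  induction h with
  | refl => rfl
  | tail _ hstep ih => rw [ih, step_nf hstep]

lemma reduced_nf {E : Finset (Atom × RawTerm V F)} (h : ReducedEnv E) : nf E = E := by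
  have : ∀ p ∈ E, nf1 (V := V) (F := F) p.2 p.1 = {p} := by
    intro p hp
    rcases h p hp with ⟨a, rfl⟩ | ⟨a, x, rfl⟩ <;> simp [nf1]
  calc nf E = E.biUnion (fun p => {p}) := Finset.biUnion_congr rfl this
    _ = E := by simp [Finset.biUnion_singleton]

lemma meas_insert_le (x : Atom × RawTerm V F) (E : Finset (Atom × RawTerm V F)) :
    measureE (insert x E) ≤ tsize x.2 + measureE E := by
  by_cases h : x ∈ E
  · rw [Finset.insert_eq_self.2 h]; exact Nat.le_add_left _ _
  · simp only [measureE]; rw [Finset.sum_insert h]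

lemma step_meas {E E' : Finset (Atom × RawTerm V F)} (h : EStep E E') :
    measureE E' < measureE E := by
  cases h with
  | atom a b E hne hmem =>
      simp only [measureE]; rw [Finset.sum_insert hmem]; simp [tsize, measureE]
  | mod a π t E hmem =>
      have := meas_insert_le (π⁻¹.1 a, t) E
      simp only [measureE, tsize] at this ⊢
      rw [Finset.sum_insert hmem]; simp only [tsize]; omega
  | abs_diff a b t E hne hmem =>
      have := meas_insert_le (a, t) E
      simp only [measureE, tsize] at this ⊢
      rw [Finset.sum_insert hmem]; simp only [tsize]; omega
  | abs_same a t E hmem =>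
      simp only [measureE]; rw [Finset.sum_insert hmem]; simp [tsize, measureE]
  | unit a E hmem =>
      simp only [measureE]; rw [Finset.sum_insert hmem]; simp [tsize, measureE]
  | pair a t s E hmem =>
      have h1 := meas_insert_le (a, t) (insert (a, s) E)
      have h2 := meas_insert_le (a, s) E
      simp only [measureE, tsize] at h1 h2 ⊢
      rw [Finset.sum_insert hmem]; simp only [tsize]; omega
  | app a f t E hmem =>
      have := meas_insert_le (a, t) E
      simp only [measureE, tsize] at this ⊢
      rw [Finset.sum_insert hmem]; simp only [tsize]; omega

lemma step_of_not_reduced {E : Finset (Atom × RawTerm V F)} (h : ¬ ReducedEnv E) :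
    ∃ E', EStep E E' := by
  rw [ReducedEnv] at h
  push_neg at h
  obtain ⟨⟨a, t⟩, hp, h1, h2⟩ := h
  have hE : insert (a, t) (E.erase (a, t)) = E := Finset.insert_erase hp
  have hnm : (a, t) ∉ E.erase (a, t) := Finset.notMem_erase _ _
  cases t with
  | var x => exact absurd rfl (h2 a x)
  | atom b =>
      have hne : a ≠ b := by rintro rfl; exact absurd rfl (h1 a)
      exact ⟨_, hE ▸ EStep.atom a b _ hne hnm⟩
  | mod π t => exact ⟨_, hE ▸ EStep.mod a π t _ hnm⟩
  | abs b t =>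
      by_cases hab : a = b
      · subst hab; exact ⟨_, hE ▸ EStep.abs_same a t _ hnm⟩
      · exact ⟨_, hE ▸ EStep.abs_diff a b t _ hab hnm⟩
  | unit => exact ⟨_, hE ▸ EStep.unit a _ hnm⟩
  | pair t s => exact ⟨_, hE ▸ EStep.pair a t s _ hnm⟩
  | app f t => exact ⟨_, hE ▸ EStep.app a f t _ hnm⟩

lemma exists_red (E : Finset (Atom × RawTerm V F)) :
    ∃ E', Relation.ReflTransGen EStep E E' ∧ ReducedEnv E' := by
  generalize hn : measureE E = n
  induction n using Nat.strong_induction_on generalizing E with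
  | _ n ih =>
    by_cases hred : ReducedEnv E
    · exact ⟨E, Relation.ReflTransGen.refl, hred⟩
    · obtain ⟨E'', hstep⟩ := step_of_not_reduced hred
      have hlt : measureE E'' < n := hn ▸ step_meas hstep
      obtain ⟨E', hr, hred'⟩ := ih (measureE E'') hlt E'' rfl
      exact ⟨E', Relation.ReflTransGen.head hstep hr, hred'⟩

/-- Every freshness environment reduces under `⟹*` to a unique
reduced freshness environment, its normal form. -/
theorem unique_normal_form (V F : Type) (E : Finset (Atom × RawTerm V F)) :
    ∃! E' : Finset (Atom × RawTerm V F),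
      Relation.ReflTransGen EStep E E' ∧ ReducedEnv E' := by
  obtain ⟨E₁, hr₁, hred₁⟩ := exists_red E
  refine ⟨E₁, ⟨hr₁, hred₁⟩, ?_⟩
  rintro E₂ ⟨hr₂, hred₂⟩
  have h1 : nf E = E₁ := (rtg_nf hr₁).trans (reduced_nf hred₁)
  have h2 : nf E = E₂ := (rtg_nf hr₂).trans (reduced_nf hred₂)
  rw [← h1, ← h2]
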